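/- Let n ≥ 2 and θ ∈ ℝ. For every ξ ∈ ℝⁿ at which q_θ(ξ) does not lie on the non-positive real axis, the function u(ξ) := log q_θ(ξ) (principal branch of the complex logarithm) satisfies Δ_θ u(ξ) = 2(n − 2) · q_θ(ξ)^{−1}. -/

import Mathlib

/-- Unmixed second partial derivative in coordinate direction `j` of a complex-valued
function on `ℝⁿ`. -/
noncomputable def partial2 {n : ℕ} (u : (Fin n → ℝ) → ℂ) (j : Fin n) (ξ : Fin n → ℝ) : ℂ :=
  iteratedDeriv 2 (fun t : ℝ => u (Function.update ξ j t)) (ξ j)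

/-- The θ-Laplace–Beltrami operator `Δ_θ u = e^{−iπθ} ∂₀² u − Σ_{j≥1} ∂ⱼ² u`. -/
noncomputable def thetaLap {n : ℕ} [NeZero n] (θ : ℝ) (u : (Fin n → ℝ) → ℂ)
    (ξ : Fin n → ℝ) : ℂ :=
  Complex.exp (-(Real.pi * θ) * Complex.I) * partial2 u 0 ξ -
    ∑ j ∈ Finset.univ.filter (fun j : Fin n => j ≠ 0), partial2 u j ξ

/-- The θ-metric quadratic form `q_θ(ξ) = e^{iπθ} ξ₀² − Σ_{j≥1} ξⱼ²`. -/
noncomputable def qform (n : ℕ) [NeZero n] (θ : ℝ) (ξ : Fin n → ℝ) : ℂ :=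
  Complex.exp (Real.pi * θ * Complex.I) * (ξ 0 : ℂ) ^ 2 -
    ∑ j ∈ Finset.univ.filter (fun j : Fin n => j ≠ 0), (ξ j : ℂ) ^ 2

lemma coe_hasDerivAt (y : ℝ) : HasDerivAt (fun t : ℝ => (t : ℂ)) 1 y := by
  simpa using (hasDerivAt_id y).ofReal_comp

lemma quad_hasDerivAt (c d : ℂ) (y : ℝ) :
    HasDerivAt (fun t : ℝ => c * (t : ℂ) ^ 2 + d) (2 * c * y) y := by
  have h : (fun t : ℝ => c * (t : ℂ) ^ 2 + d) = fun t : ℝ => c * ((t : ℂ) * (t : ℂ)) + d := by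
    funext t; ring
  rw [h]
  have h2 := (((coe_hasDerivAt y).mul (coe_hasDerivAt y)).const_mul c).add_const d
  exact h2.congr_deriv (by ring)

lemma iteratedDeriv_two_log_quad (c d q : ℂ) (x : ℝ)
    (hq : c * (x : ℂ) ^ 2 + d = q) (h : q ∈ Complex.slitPlane) :
    iteratedDeriv 2 (fun t : ℝ => Complex.log (c * (t : ℂ) ^ 2 + d)) x =
      2 * c * q⁻¹ - 4 * c ^ 2 * (x : ℂ) ^ 2 * (q⁻¹) ^ 2 := by
  have hQne : q ≠ 0 := Complex.slitPlane_ne_zero h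
  set f : ℝ → ℂ := fun t : ℝ => Complex.log (c * (t : ℂ) ^ 2 + d) with hf
  set g : ℝ → ℂ := fun y : ℝ => 2 * c * (y : ℂ) * (c * (y : ℂ) ^ 2 + d)⁻¹ with hgdef
  have hU : IsOpen {t : ℝ | c * (t : ℂ) ^ 2 + d ∈ Complex.slitPlane} := by
    have hcont : Continuous fun t : ℝ => c * (t : ℂ) ^ 2 + d := by continuity
    exact Complex.isOpen_slitPlane.preimage hcont
  have hxU : x ∈ {t : ℝ | c * (t : ℂ) ^ 2 + d ∈ Complex.slitPlane} := by
    simp only [Set.mem_setOf_eq, hq]; exact h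
  have hev : deriv f =ᶠ[nhds x] g := by
    filter_upwards [hU.mem_nhds hxU] with y hy
    have := (quad_hasDerivAt c d y).clog_real hy
    rw [this.deriv, hgdef]
    simp [div_eq_mul_inv]
  have hder : iteratedDeriv 2 f x = deriv g x := by
    rw [show (2:ℕ) = 1 + 1 from rfl, iteratedDeriv_succ, iteratedDeriv_one]
    exact hev.deriv_eq
  have hne : c * (x : ℂ) ^ 2 + d ≠ 0 := by rw [hq]; exact hQne
  have hinv : HasDerivAt (fun y : ℝ => (c * (y : ℂ) ^ 2 + d)⁻¹)
      ((0 * (c * (x : ℂ) ^ 2 + d) - 1 * (2 * c * x)) / (c * (x : ℂ) ^ 2 + d) ^ 2) x := by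
    have := (hasDerivAt_const x (1 : ℂ)).div (quad_hasDerivAt c d x) hne
    simpa [one_div, Pi.div_def] using this
  have hlin : HasDerivAt (fun y : ℝ => 2 * c * (y : ℂ)) (2 * c) x := by
    simpa using (coe_hasDerivAt x).const_mul (2 * c)
  have hg := hlin.mul hinv
  rw [hder, show g = ((fun y : ℝ => 2 * c * (y : ℂ)) * fun y : ℝ => (c * (y : ℂ) ^ 2 + d)⁻¹) from rfl, hg.deriv, hq]
  field_simp
  ring

lemma qform_update (n : ℕ) [NeZero n] (θ : ℝ) (ξ : Fin n → ℝ) (j : Fin n) (t : ℝ) :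
    qform n θ (Function.update ξ j t) =
      (if j = 0 then Complex.exp (Real.pi * θ * Complex.I) else -1) * (t : ℂ) ^ 2 +
        (qform n θ ξ -
          (if j = 0 then Complex.exp (Real.pi * θ * Complex.I) else -1) * ((ξ j : ℝ) : ℂ) ^ 2) := by
  by_cases hj : j = 0
  · subst hj
    simp only [if_pos rfl, qform, Function.update_self]
    have hsum : ∑ k ∈ Finset.univ.filter (fun k : Fin n => k ≠ 0),
        ((Function.update ξ 0 t k : ℝ) : ℂ) ^ 2 =
        ∑ k ∈ Finset.univ.filter (fun k : Fin n => k ≠ 0), ((ξ k : ℝ) : ℂ) ^ 2 := by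
      refine Finset.sum_congr rfl fun k hk => ?_
      rw [Function.update_of_ne (Finset.mem_filter.mp hk).2]
    rw [hsum]; simp only [if_true]; ring
  · simp only [if_neg hj, qform, Function.update_of_ne (Ne.symm hj)]
    have hjmem : j ∈ Finset.univ.filter (fun k : Fin n => k ≠ 0) := by
      simp [hj]
    rw [← Finset.sum_erase_add _ _ hjmem, ← Finset.sum_erase_add _
      (fun k => ((ξ k : ℝ) : ℂ) ^ 2) hjmem]
    have hsum : ∑ k ∈ (Finset.univ.filter (fun k : Fin n => k ≠ 0)).erase j,
        ((Function.update ξ j t k : ℝ) : ℂ) ^ 2 =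
        ∑ k ∈ (Finset.univ.filter (fun k : Fin n => k ≠ 0)).erase j, ((ξ k : ℝ) : ℂ) ^ 2 := by
      refine Finset.sum_congr rfl fun k hk => ?_
      rw [Function.update_of_ne (Finset.mem_erase.mp hk).1]
    rw [hsum, Function.update_self]
    ring

lemma partial2_log_qform (n : ℕ) [NeZero n] (θ : ℝ) (ξ : Fin n → ℝ) (j : Fin n)
    (hξ : qform n θ ξ ∈ Complex.slitPlane) :
    partial2 (fun x => Complex.log (qform n θ x)) j ξ =
      2 * (if j = 0 then Complex.exp (Real.pi * θ * Complex.I) else -1) * (qform n θ ξ)⁻¹ -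
      4 * (if j = 0 then Complex.exp (Real.pi * θ * Complex.I) else -1) ^ 2 *
        ((ξ j : ℝ) : ℂ) ^ 2 * ((qform n θ ξ)⁻¹) ^ 2 := by
  set c : ℂ := if j = 0 then Complex.exp (Real.pi * θ * Complex.I) else -1 with hc
  have hfun : (fun t : ℝ => Complex.log (qform n θ (Function.update ξ j t))) =
      fun t : ℝ => Complex.log (c * (t : ℂ) ^ 2 + (qform n θ ξ - c * ((ξ j : ℝ) : ℂ) ^ 2)) := by
    funext t; rw [qform_update]
  rw [partial2, hfun]
  exact iteratedDeriv_two_log_quad c _ _ (ξ j) (by ring) hξ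

/-- for `n ≥ 2`, wherever `q_θ(ξ)` avoids the non-positive real axis
(`Complex.slitPlane`), the principal logarithm `u = log q_θ` satisfies
`Δ_θ u = 2(n − 2) q_θ⁻¹`. -/
theorem thetaLap_qform_log (n : ℕ) [NeZero n] (hn : 2 ≤ n) (θ : ℝ) (ξ : Fin n → ℝ)
    (hξ : qform n θ ξ ∈ Complex.slitPlane) :
    thetaLap θ (fun x => Complex.log (qform n θ x)) ξ =
      2 * ((n : ℂ) - 2) * (qform n θ ξ)⁻¹ := by
  have hQne : qform n θ ξ ≠ 0 := Complex.slitPlane_ne_zero hξ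
  have hEne : Complex.exp (Real.pi * θ * Complex.I) ≠ 0 := Complex.exp_ne_zero _
  have hexp : Complex.exp (-(Real.pi * θ) * Complex.I) =
      (Complex.exp (Real.pi * θ * Complex.I))⁻¹ := by
    rw [show (-((Real.pi : ℂ) * θ)) * Complex.I = -((Real.pi : ℂ) * θ * Complex.I) by ring,
      Complex.exp_neg]
  have hS : ∑ j ∈ Finset.univ.filter (fun j : Fin n => j ≠ 0), ((ξ j : ℝ) : ℂ) ^ 2 =
      Complex.exp (Real.pi * θ * Complex.I) * ((ξ 0 : ℝ) : ℂ) ^ 2 - qform n θ ξ := by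
    rw [qform]; ring
  have hcard : (Finset.univ.filter (fun j : Fin n => j ≠ 0)).card = n - 1 := by
    rw [Finset.filter_ne', Finset.card_erase_of_mem (Finset.mem_univ _), Finset.card_univ,
      Fintype.card_fin]
  have hsum : ∑ j ∈ Finset.univ.filter (fun j : Fin n => j ≠ 0),
      partial2 (fun x => Complex.log (qform n θ x)) j ξ =
      ∑ j ∈ Finset.univ.filter (fun j : Fin n => j ≠ 0),
        ((-(2 * (qform n θ ξ)⁻¹)) + (-(4 * ((qform n θ ξ)⁻¹) ^ 2)) * ((ξ j : ℝ) : ℂ) ^ 2) := by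
    refine Finset.sum_congr rfl fun j hj => ?_
    have hj0 : j ≠ 0 := (Finset.mem_filter.mp hj).2
    rw [partial2_log_qform n θ ξ j hξ, if_neg hj0]
    ring
  rw [thetaLap, partial2_log_qform n θ ξ 0 hξ, if_pos rfl, hsum, Finset.sum_add_distrib,
    Finset.sum_const, ← Finset.mul_sum, hS, hcard, hexp, nsmul_eq_mul,
    Nat.cast_sub (le_trans one_le_two hn), Nat.cast_one]
  linear_combination (2 * (qform n θ ξ)⁻¹ -
      4 * Complex.exp (Real.pi * θ * Complex.I) * ((ξ 0 : ℝ) : ℂ) ^ 2 * ((qform n θ ξ)⁻¹) ^ 2) *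
        inv_mul_cancel₀ hEne + (-4 * (qform n θ ξ)⁻¹) * inv_mul_cancel₀ hQne
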